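/- Let A ∈ ℝ^{n×n} satisfy eᵢᵀA = 0 (i.e., ℓᵢ = 0 for node i), and let W(p,T) be the finite-time Gramian with W(p,T) positive definite, where p has entries pⱼ ≥ 0 with pᵢ > 0. Then tr(W(p,T)⁻¹) ≥ 1/(pᵢ T), and consequently for any fixed ε > 0, if tr(W(p,T)⁻¹) ≤ ε then pᵢ ≥ 1/(εT). -/

import Mathlib

open Matrix NormedSpace

attribute [local instance] Matrix.linftyOpNormedAddCommGroup Matrix.linftyOpNormedSpace

variable {n : ℕ}

noncomputable def entryCLM (i j : Fin n) : Matrix (Fin n) (Fin n) ℝ →L[ℝ] ℝ :=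
  LinearMap.mkContinuous (Matrix.entryLinearMap ℝ ℝ i j) 1 fun M => by
    rw [one_mul]
    have h : ‖M i j‖₊ ≤ ‖M‖₊ := by
      rw [Matrix.linfty_opNNNorm_def]
      exact le_trans
        (Finset.single_le_sum (f := fun k => ‖M i k‖₊) (fun _ _ => zero_le) (Finset.mem_univ j))
        (Finset.le_sup (f := fun r => ∑ k, ‖M r k‖₊) (Finset.mem_univ i))
    exact_mod_cast h

@[simp] lemma entryCLM_apply (i j : Fin n) (M : Matrix (Fin n) (Fin n) ℝ) :
    entryCLM i j M = M i j := rfl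

lemma row_pow {M : Matrix (Fin n) (Fin n) ℝ} {i : Fin n} (h : M i = 0) :
    ∀ k : ℕ, k ≠ 0 → ∀ j, (M ^ k) i j = 0 := by
  intro k hk j
  cases k with
  | zero => exact absurd rfl hk
  | succ k =>
    rw [pow_succ', Matrix.mul_apply]
    simp [congrFun h]

lemma exp_row {M : Matrix (Fin n) (Fin n) ℝ} {i : Fin n} (h : M i = 0) (j : Fin n) :
    exp M i j = (1 : Matrix (Fin n) (Fin n) ℝ) i j := by
  letI : NormedRing (Matrix (Fin n) (Fin n) ℝ) := Matrix.linftyOpNormedRing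
  letI : NormedAlgebra ℝ (Matrix (Fin n) (Fin n) ℝ) := Matrix.linftyOpNormedAlgebra
  have hsum : Summable fun k : ℕ => ((Nat.factorial k : ℝ))⁻¹ • M ^ k := expSeries_summable' M
  have hmap := ((entryCLM i j).map_tsum hsum).symm
  rw [exp_eq_tsum ℝ]
  show entryCLM i j (∑' k : ℕ, ((Nat.factorial k : ℝ))⁻¹ • M ^ k) = _
  rw [← hmap]
  rw [tsum_eq_single 0 (by
    intro k hk
    simp [row_pow h k hk j])]
  simp

lemma posdef_diag_pos {W : Matrix (Fin n) (Fin n) ℝ} (h : W.PosDef) (j : Fin n) :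
    0 < W j j := by
  have h2 := h.dotProduct_mulVec_pos (x := Pi.single j 1) (by
    intro hc
    simpa using congrFun hc j)
  simpa [single_dotProduct, Matrix.mulVec_single] using h2

theorem aecs_lower_bound_zero_self_loop {n : ℕ} (A : Matrix (Fin n) (Fin n) ℝ)
    (i : Fin n) (hA : A i = 0)
    (p : Fin n → ℝ) (hp : ∀ j, 0 ≤ p j) (hpi : 0 < p i) (T : ℝ) (hT : 0 < T)
    (hW : (∫ t in (0:ℝ)..T,
        exp (t • A) * Matrix.diagonal p * exp (t • Aᵀ)).PosDef) :
    1 / (p i * T) ≤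
      Matrix.trace (∫ t in (0:ℝ)..T,
        exp (t • A) * Matrix.diagonal p * exp (t • Aᵀ))⁻¹ ∧
    ∀ ε : ℝ, 0 < ε →
      Matrix.trace (∫ t in (0:ℝ)..T,
        exp (t • A) * Matrix.diagonal p * exp (t • Aᵀ))⁻¹ ≤ ε →
      1 / (ε * T) ≤ p i := by
  set W : Matrix (Fin n) (Fin n) ℝ :=
    ∫ t in (0:ℝ)..T, exp (t • A) * Matrix.diagonal p * exp (t • Aᵀ) with hWdef
  letI : NormedRing (Matrix (Fin n) (Fin n) ℝ) := Matrix.linftyOpNormedRing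
  letI : NormedAlgebra ℝ (Matrix (Fin n) (Fin n) ℝ) := Matrix.linftyOpNormedAlgebra
  have hrowt : ∀ t : ℝ, (t • A) i = 0 := fun t => by
    ext j; simp [Matrix.smul_apply, congrFun hA j]
  have hentry : ∀ t : ℝ,
      (exp (t • A) * Matrix.diagonal p * exp (t • Aᵀ)) i i = p i := by
    intro t
    have ht : exp (t • Aᵀ) = (exp (t • A))ᵀ := by
      rw [← Matrix.transpose_smul, Matrix.exp_transpose]
    rw [ht]
    simp only [Matrix.mul_apply, Matrix.transpose_apply, exp_row (hrowt t)]
    simp [Matrix.one_apply, Matrix.diagonal_apply, ite_mul, mul_ite]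
  have hcont : Continuous fun t : ℝ =>
      exp (t • A) * Matrix.diagonal p * exp (t • Aᵀ) := by
    letI : NormedAlgebra ℚ (Matrix (Fin n) (Fin n) ℝ) := NormedAlgebra.restrictScalars ℚ ℝ _
    have h1 : Continuous fun t : ℝ => exp (t • A) :=
      exp_continuous.comp (continuous_id.smul continuous_const)
    have h2 : Continuous fun t : ℝ => exp (t • Aᵀ) :=
      exp_continuous.comp (continuous_id.smul continuous_const)
    exact (h1.mul continuous_const).mul h2
  letI : ENormedAddMonoid (Matrix (Fin n) (Fin n) ℝ) :=
    NormedAddCommGroup.toENormedAddCommMonoid.toENormedAddMonoid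
  have hint : IntervalIntegrable
      (fun t : ℝ => exp (t • A) * Matrix.diagonal p * exp (t • Aᵀ))
      MeasureTheory.volume 0 T := hcont.intervalIntegrable 0 T
  have hWii : W i i = p i * T := by
    have hcomm := (entryCLM i i).intervalIntegral_comp_comm hint
    have : entryCLM i i W = p i * T := by
      rw [hWdef]
      refine hcomm.symm.trans ?_
      show (∫ t in (0:ℝ)..T, (exp (t • A) * Matrix.diagonal p * exp (t • Aᵀ)) i i) = p i * T
      simp only [entryCLM_apply, hentry]
      simp [mul_comm]
    simpa using this
  have hdet : IsUnit W.det := isUnit_iff_ne_zero.mpr hW.det_pos.ne'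
  have hWinv : W * W⁻¹ = 1 := Matrix.mul_nonsing_inv W hdet
  have hWsym : Wᵀ = W := by
    have h1 := hW.isHermitian
    rw [Matrix.IsHermitian] at h1
    simpa using h1
  have hWinvPD : (W⁻¹).PosDef := hW.inv
  set c : ℝ := W⁻¹ i i with hcdef
  have hc : 0 < c := posdef_diag_pos hWinvPD i
  have hw : 0 < p i * T := by positivity
  have hkey : 1 / (p i * T) ≤ c := by
    set e : Fin n → ℝ := Pi.single i 1 with hedef
    set y : Fin n → ℝ := W⁻¹ *ᵥ e with hydef
    have hWy : W *ᵥ y = e := by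
      rw [hydef, Matrix.mulVec_mulVec, hWinv, Matrix.one_mulVec]
    have hyi : y ⬝ᵥ e = c := by
      rw [hydef, hedef]
      simp [dotProduct_single, Matrix.mulVec_single, hcdef]
    have heWe : e ⬝ᵥ (W *ᵥ e) = W i i := by
      rw [hedef]
      simp [single_dotProduct, Matrix.mulVec_single]
    have heWy : e ⬝ᵥ (W *ᵥ y) = 1 := by
      rw [hWy, hedef]
      simp [single_dotProduct, Pi.single_apply]
    have hyWe : y ⬝ᵥ (W *ᵥ e) = 1 := by
      rw [Matrix.dotProduct_mulVec, ← hWsym, Matrix.vecMul_transpose, hWy, hedef]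
      simp [dotProduct_single, Pi.single_apply]
    have hyWy : y ⬝ᵥ (W *ᵥ y) = c := by rw [hWy, hyi]
    have hq := hW.posSemidef.dotProduct_mulVec_nonneg (e - c⁻¹ • y)
    rw [star_trivial] at hq
    simp only [Matrix.mulVec_sub, Matrix.mulVec_smul, sub_dotProduct,
      dotProduct_sub, smul_dotProduct, dotProduct_smul,
      smul_eq_mul] at hq
    rw [heWe, heWy, hyWe, hyWy, hWii] at hq
    have hinv : c⁻¹ * c = 1 := inv_mul_cancel₀ hc.ne'
    have h1 : c⁻¹ ≤ p i * T := by nlinarith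
    rw [div_le_iff₀ hw]
    nlinarith [mul_inv_cancel₀ hc.ne', mul_le_mul_of_nonneg_left h1 hc.le]
  have htr : c ≤ Matrix.trace W⁻¹ := by
    rw [Matrix.trace]
    exact Finset.single_le_sum (fun j _ => (posdef_diag_pos hWinvPD j).le)
      (Finset.mem_univ i)
  refine ⟨le_trans hkey htr, fun ε hε htrace => ?_⟩
  have h1 : 1 / (p i * T) ≤ ε := le_trans (le_trans hkey htr) htrace
  rw [div_le_iff₀ hw] at h1
  rw [div_le_iff₀ (by positivity : (0:ℝ) < ε * T)]
  nlinarith
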